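/- (Example 1 conclusion.) Let k and n be integers with 0 ≤ n ≤ k − 3, and define G(s) = ∫₀^1 t^n e^{−st} dt for s > 0. Then G(s) > 0 and G′(s) < 0 for all s > 0, and G′(s)/G(s) − 2·G″(s)/G′(s) ≤ k/s for all s > 0. -/

import Mathlib

open Real MeasureTheory Set Metric intervalIntegral

noncomputable def Im (m : ℕ) (s : ℝ) : ℝ := ∫ t in (0:ℝ)..1, t ^ m * Real.exp (-s * t)

lemma contIm (m : ℕ) (s : ℝ) : Continuous (fun t : ℝ => t ^ m * Real.exp (-s * t)) := by
  exact (continuous_pow m).mul ((continuous_const.mul continuous_id).rexp)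

lemma intgIm (m : ℕ) (s : ℝ) :
    IntervalIntegrable (fun t : ℝ => t ^ m * Real.exp (-s * t)) volume 0 1 :=
  (contIm m s).intervalIntegrable 0 1

lemma Im_pos (m : ℕ) (s : ℝ) : 0 < Im m s := by
  refine intervalIntegral.intervalIntegral_pos_of_pos_on (intgIm m s) ?_ one_pos
  intro x hx
  exact mul_pos (pow_pos hx.1 m) (Real.exp_pos _)

lemma Im_mono (m : ℕ) (s : ℝ) : Im (m + 1) s ≤ Im m s := by
  refine intervalIntegral.integral_mono_on one_pos.le (intgIm (m+1) s) (intgIm m s) ?_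
  intro t ht
  have h1 : t ^ (m+1) ≤ t ^ m := pow_le_pow_of_le_one ht.1 ht.2 (Nat.le_succ m)
  exact mul_le_mul_of_nonneg_right h1 (Real.exp_pos _).le

lemma hasDerivIm (m : ℕ) (s : ℝ) : HasDerivAt (Im m) (-(Im (m+1) s)) s := by
  have key := intervalIntegral.hasDerivAt_integral_of_dominated_loc_of_deriv_le
    (F := fun x t => t ^ m * Real.exp (-x * t))
    (F' := fun x t => -(t ^ (m+1) * Real.exp (-x * t)))
    (x₀ := s) (a := 0) (b := 1) (μ := volume)
    (bound := fun _ => Real.exp (|s| + 1)) (Metric.ball_mem_nhds s one_pos)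
    (Filter.Eventually.of_forall fun x => ((contIm m x)).aestronglyMeasurable)
    (intgIm m s)
    ((contIm (m+1) s).neg.aestronglyMeasurable)
    ?_ (intervalIntegrable_const) ?_
  · have := key.2
    have heq : (∫ t in (0:ℝ)..1, -(t ^ (m+1) * Real.exp (-s * t))) = -(Im (m+1) s) := by
      rw [intervalIntegral.integral_neg]; rfl
    rw [heq] at this
    exact this
  · refine Filter.Eventually.of_forall fun t ht x hx => ?_
    rw [Set.uIoc_of_le (zero_le_one)] at ht
    have ht0 : 0 < t := ht.1
    have ht1 : t ≤ 1 := ht.2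
    have h1 : t ^ (m+1) ≤ 1 := pow_le_one₀ ht0.le ht1
    have h2 : Real.exp (-x * t) ≤ Real.exp (|s| + 1) := by
      apply Real.exp_le_exp.2
      have hx' : |x - s| < 1 := by simpa [Real.dist_eq] using hx
      have : |x| < |s| + 1 := by
        have := abs_sub_abs_le_abs_sub x s
        linarith
      calc -x * t ≤ |x| * t := by
            apply mul_le_mul_of_nonneg_right _ ht0.le
            exact neg_le_abs x
        _ ≤ (|s| + 1) * 1 := by
            apply mul_le_mul this.le ht1 ht0.le (by positivity)
        _ = |s| + 1 := by ring
    have habs : |t ^ (m+1) * Real.exp (-x * t)| = t ^ (m+1) * Real.exp (-x*t) := by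
      rw [abs_of_nonneg]; positivity
    rw [norm_neg, Real.norm_eq_abs, habs]
    calc t ^ (m+1) * Real.exp (-x*t) ≤ 1 * Real.exp (|s|+1) :=
          mul_le_mul h1 h2 (Real.exp_pos _).le zero_le_one
      _ = Real.exp (|s|+1) := one_mul _
  · refine Filter.Eventually.of_forall fun t _ x _ => ?_
    have h1 : HasDerivAt (fun x : ℝ => -x * t) (-t) x := by
      simpa using ((hasDerivAt_id x).neg.mul_const t)
    have h2 : HasDerivAt (fun x : ℝ => Real.exp (-x * t)) (Real.exp (-x*t) * (-t)) x :=
      h1.exp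
    have h3 : HasDerivAt (fun x : ℝ => t ^ m * Real.exp (-x * t)) _ x := h2.const_mul (t ^ m)
    exact h3.congr_deriv (by ring)

lemma Im_ibp (m : ℕ) (s : ℝ) :
    s * Im (m+1) s = (m+1 : ℝ) * Im m s - Real.exp (-s) := by
  have hderiv : ∀ t ∈ Set.uIcc (0:ℝ) 1,
      HasDerivAt (fun t : ℝ => t ^ (m+1) * Real.exp (-s * t))
        ((m+1 : ℝ) * t ^ m * Real.exp (-s*t) - s * (t ^ (m+1) * Real.exp (-s*t))) t := by
    intro t _
    have h1 : HasDerivAt (fun t : ℝ => t ^ (m+1)) ((m+1 : ℝ) * t ^ m) t := by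
      simpa using hasDerivAt_pow (m+1) t
    have h2 : HasDerivAt (fun t : ℝ => Real.exp (-s * t)) (Real.exp (-s*t) * (-s)) t := by
      have : HasDerivAt (fun t : ℝ => -s * t) (-s) t := by
        simpa using (hasDerivAt_id t).const_mul (-s)
      exact this.exp
    have : HasDerivAt (fun t : ℝ => t ^ (m+1) * Real.exp (-s * t)) _ t := h1.mul h2
    convert this using 1
    ring
  have hint : IntervalIntegrable
      (fun t : ℝ => (m+1 : ℝ) * t ^ m * Real.exp (-s*t) - s * (t ^ (m+1) * Real.exp (-s*t)))
      volume 0 1 := by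
    apply IntervalIntegrable.sub
    · simpa [mul_assoc] using (intgIm m s).const_mul ((m:ℝ)+1)
    · exact (intgIm (m+1) s).const_mul s
  have key := intervalIntegral.integral_eq_sub_of_hasDerivAt hderiv hint
  have hsplit : (∫ t in (0:ℝ)..1,
      ((m+1 : ℝ) * t ^ m * Real.exp (-s*t) - s * (t ^ (m+1) * Real.exp (-s*t)))) =
      (m+1 : ℝ) * Im m s - s * Im (m+1) s := by
    rw [intervalIntegral.integral_sub (by simpa [mul_assoc] using (intgIm m s).const_mul ((m:ℝ)+1))
      ((intgIm (m+1) s).const_mul s)]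
    unfold Im
    rw [← intervalIntegral.integral_const_mul, ← intervalIntegral.integral_const_mul]
    simp [mul_assoc]
  rw [hsplit] at key
  norm_num at key
  linarith [key]

lemma alg_step (A B C E s kk nn : ℝ) (hApos : 0 < A) (hBpos : 0 < B) (hBA : B ≤ A)
    (hE : 0 < E) (hs : 0 < s) (h1 : s * B = (nn+1) * A - E) (h2 : s * C = (nn+2) * B - E)
    (hk : nn + 3 ≤ kk) : -B/A - 2*C/(-B) ≤ kk/s := by
  have goal2 : -B/A - 2*C/(-B) ≤ (nn+3)/s := by
    rw [le_div_iff₀ hs]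
    have expand : (-B/A - 2*C/(-B)) * s = (-(s*B))/A + (2*(s*C))/B := by
      field_simp [hApos.ne', hBpos.ne']
      ring
    rw [expand, h1, h2]
    have t1 : -((nn+1)*A - E)/A = -(nn+1) + E/A := by
      field_simp
      ring
    have t2 : 2*((nn+2)*B - E)/B = 2*(nn+2) - 2*(E/B) := by
      field_simp
    rw [t1, t2]
    have hEA : E/A ≤ E/B := by gcongr
    have hEB : 0 < E/B := div_pos hE hBpos
    linarith
  have goal3 : (nn+3)/s ≤ kk/s := by gcongr
  linarith

theorem stmt15 (k n : ℕ) (hn : n + 3 ≤ k) (G : ℝ → ℝ)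
    (hG : ∀ s : ℝ, G s = ∫ t in (0 : ℝ)..1, t ^ n * Real.exp (-s * t)) :
    (∀ s > (0 : ℝ), 0 < G s ∧ deriv G s < 0) ∧
    (∀ s > (0 : ℝ),
      deriv G s / G s - 2 * deriv (deriv G) s / deriv G s ≤ k / s) := by
  have hGeq : G = Im n := funext fun s => hG s
  subst hGeq
  have hd1 : deriv (Im n) = fun s => -(Im (n+1) s) :=
    funext fun s => (hasDerivIm n s).deriv
  have hd2 : ∀ s, deriv (deriv (Im n)) s = Im (n+2) s := by
    intro s
    rw [hd1]
    have : HasDerivAt (fun s => -(Im (n+1) s)) (-(-(Im (n+2) s))) s := (hasDerivIm (n+1) s).neg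
    rw [neg_neg] at this
    exact this.deriv
  constructor
  · intro s _
    exact ⟨Im_pos n s, by rw [hd1]; simpa using (Im_pos (n+1) s)⟩
  · intro s hs
    have hd1' : ∀ u, deriv (Im n) u = -(Im (n+1) u) := fun u => by rw [hd1]
    rw [hd2 s, hd1' s]
    set A := Im n s with hA
    set B := Im (n+1) s with hB
    set C := Im (n+2) s with hC
    have hApos : 0 < A := Im_pos n s
    have hBpos : 0 < B := Im_pos (n+1) s
    have hBA : B ≤ A := Im_mono n s
    have hE : (0:ℝ) < Real.exp (-s) := Real.exp_pos _
    set E := Real.exp (-s) with hEdef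
    have h1 : s * B = (n+1 : ℝ) * A - E := Im_ibp n s
    have h2 : s * C = (n+2 : ℝ) * B - E := by
      have := Im_ibp (n+1) s
      convert this using 2 <;> push_cast <;> ring
    have hk : (n:ℝ) + 3 ≤ (k:ℝ) := by exact_mod_cast hn
    exact alg_step A B C E s k n hApos hBpos hBA hE hs h1 h2 hk
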